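/- Let G = (V,E) be a finite simple graph, k ≥ 1 an integer, and v a large-sparse vertex of G. Suppose G contains k+1 cycles, each passing through v, such that no two of these cycles share a vertex other than v (i.e., a v-flower of order k+1). Then every feasible solution for (G,k) contains v. -/

import Mathlib

open SimpleGraph

/-- The number of edges of `G` with both endpoints in the neighborhood of `v`. -/
noncomputable def rho {V : Type*} (G : SimpleGraph V) (v : V) : ℕ :=
  {e : Sym2 V | e ∈ G.edgeSet ∧ ∀ x ∈ e, G.Adj v x}.ncard

/-- `v` is large-sparse: `|N(v)| > 7k` and `ρ(v) ≤ |N(v)|(|N(v)|−1)/4`. -/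
def LargeSparse {V : Type*} (G : SimpleGraph V) (k : ℕ) (v : V) : Prop :=
  7 * k < (G.neighborSet v).ncard ∧
    4 * rho G v ≤ (G.neighborSet v).ncard * ((G.neighborSet v).ncard - 1)

/-- `v` is large-dense: `|N(v)| > 7k` and `ρ(v) > |N(v)|(|N(v)|−1)/4`. -/
def LargeDense {V : Type*} (G : SimpleGraph V) (k : ℕ) (v : V) : Prop :=
  7 * k < (G.neighborSet v).ncard ∧
    (G.neighborSet v).ncard * ((G.neighborSet v).ncard - 1) < 4 * rho G v

/-- The connected component `c` of `H` is a clique. -/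
def CompIsClique {W : Type*} (H : SimpleGraph W) (c : H.ConnectedComponent) : Prop :=
  H.IsClique c.supp

/-- The connected component `c` of `H` is a tree. -/
def CompIsTree {W : Type*} (H : SimpleGraph W) (c : H.ConnectedComponent) : Prop :=
  (H.induce c.supp).IsTree

/-- Every connected component of `H` is a clique or a tree. -/
def CliquesOrTrees {W : Type*} (H : SimpleGraph W) : Prop :=
  ∀ c : H.ConnectedComponent, CompIsClique H c ∨ CompIsTree H c

/-- `X` is a feasible solution for `(G, k)`: `|X| ≤ k` and every connected component of
`G − X` is a clique or a tree. -/
def IsFeasible {V : Type*} (G : SimpleGraph V) (k : ℕ) (X : Set V) : Prop :=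
  X.ncard ≤ k ∧ CliquesOrTrees (G.induce (Xᶜ : Set V))

lemma exists_walk_induce {V : Type*} {G : SimpleGraph V} {S : Set V} :
    ∀ {u w : V} (p : G.Walk u w), (∀ x ∈ p.support, x ∈ S) → ∀ (hu : u ∈ S) (hw : w ∈ S),
    ∃ q : (G.induce S).Walk ⟨u, hu⟩ ⟨w, hw⟩,
      q.map (SimpleGraph.Embedding.induce S).toHom = p := by
  intro u w p
  induction p with
  | nil => exact fun _ hu _ => ⟨.nil, rfl⟩
  | @cons u b w h p ih =>
    intro hp hu hw
    have hb : b ∈ S := hp b (by simp)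
    obtain ⟨q, hq⟩ := ih (fun x hx => hp x (by simp [hx])) hb hw
    refine ⟨.cons (by exact h : (G.induce S).Adj ⟨u, hu⟩ ⟨b, hb⟩) q, ?_⟩
    subst hq; rfl

lemma two_mul_choose_two (n : ℕ) : 2 * n.choose 2 = n * (n - 1) := by
  rw [Nat.choose_two_right, Nat.mul_div_cancel']
  rcases n with _ | m
  · simp
  · simpa [Nat.succ_sub_one, mul_comm] using (Nat.even_mul_succ_self m).two_dvd

/-- if `v` is large-sparse and `G` contains a `v`-flower of order `k+1`
(that is, `k+1` cycles through `v` pairwise sharing no vertex other than `v`), then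
every feasible solution for `(G,k)` contains `v`. -/
theorem stmt_4 {V : Type*} [Fintype V] (G : SimpleGraph V) (k : ℕ) (hk : 1 ≤ k) (v : V)
    (hv : LargeSparse G k v)
    (c : Fin (k + 1) → G.Walk v v) (hcyc : ∀ i, (c i).IsCycle)
    (hdisj : ∀ i j, i ≠ j →
      ∀ x, x ∈ (c i).support → x ∈ (c j).support → x = v)
    (X : Set V) (hX : IsFeasible G k X) :
    v ∈ X := by
  classical
  by_contra hvX
  -- find a cycle disjoint from X
  have hex : ∃ i : Fin (k + 1), ∀ x ∈ (c i).support, x ∉ X := by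
    by_contra hno
    push_neg at hno
    choose F hF1 hF2 using hno
    have hinj : Function.Injective F := by
      intro i j hij
      by_contra hne
      exact hvX ((hdisj i j hne (F i) (hF1 i) (hij ▸ hF1 j)) ▸ hF2 i)
    have h1 : (Set.range F).ncard ≤ X.ncard :=
      Set.ncard_le_ncard (by rintro _ ⟨i, rfl⟩; exact hF2 i) X.toFinite
    have h2 : (Set.range F).ncard = k + 1 := by
      rw [← Set.image_univ, Set.ncard_image_of_injective _ hinj, Set.ncard_univ,
        Nat.card_eq_fintype_card, Fintype.card_fin]
    have := hX.1
    omega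
  obtain ⟨i, hi⟩ := hex
  set S : Set V := (Xᶜ : Set V) with hS
  have hvS : v ∈ S := hvX
  set H := G.induce S with hH
  obtain ⟨q, hq⟩ := exists_walk_induce (S := S) (c i) (fun x hx => hi x hx) hvS hvS
  have hinjf : Function.Injective ((SimpleGraph.Embedding.induce (G := G) S).toHom) :=
    Subtype.val_injective
  have hqc : q.IsCycle := by
    rw [← SimpleGraph.Walk.map_isCycle_iff_of_injective hinjf, hq]
    exact hcyc i
  set comp := H.connectedComponentMk ⟨v, hvS⟩ with hcomp
  rcases hX.2 comp with hcl | ht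
  · -- clique case: too many edges among neighbors
    have hmemN : ∀ a (ha : a ∈ G.neighborSet v \ X), (⟨a, ha.2⟩ : S) ∈ comp.supp := by
      intro a ha
      rw [SimpleGraph.ConnectedComponent.mem_supp_iff]
      apply SimpleGraph.ConnectedComponent.sound
      exact (SimpleGraph.Adj.reachable (by exact ha.1 : H.Adj ⟨v, hvS⟩ ⟨a, ha.2⟩)).symm
    set T : Set V := G.neighborSet v \ X with hT
    set Tf : Finset V := T.toFinite.toFinset with hTf
    have hsub : ↑(Tf.offDiag.image Sym2.mk.uncurry) ⊆
        {e : Sym2 V | e ∈ G.edgeSet ∧ ∀ x ∈ e, G.Adj v x} := by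
      intro e he
      simp only [Finset.coe_image, Set.mem_image, Finset.mem_coe, Finset.mem_offDiag, Function.uncurry_apply_pair] at he
      obtain ⟨⟨a, b⟩, ⟨ha, hb, hab⟩, rfl⟩ := he
      rw [Set.Finite.mem_toFinset] at ha hb
      have hadj : G.Adj a b := by
        have := hcl (hmemN a ha) (hmemN b hb)
          (by simp only [ne_eq, Subtype.mk.injEq]; exact hab)
        exact this
      refine ⟨hadj, ?_⟩
      intro x hx
      rcases Sym2.mem_iff.mp hx with rfl | rfl
      · exact ha.1
      · exact hb.1
    have hcard : T.ncard.choose 2 ≤ rho G v := by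
      have h1 : (↑(Tf.offDiag.image Sym2.mk.uncurry) : Set (Sym2 V)).ncard ≤ rho G v :=
        Set.ncard_le_ncard hsub (Set.toFinite _)
      rwa [Set.ncard_coe_finset, Sym2.card_image_offDiag,
        ← Set.ncard_eq_toFinset_card T] at h1
    -- counting
    have hd := hv.1
    have hrho := hv.2
    have hn : (G.neighborSet v).ncard ≤ T.ncard + X.ncard :=
      Set.ncard_le_ncard_diff_add_ncard _ _ X.toFinite
    have hXk := hX.1
    set d := (G.neighborSet v).ncard
    set n := T.ncard
    have h2 : 2 * (n * (n - 1)) ≤ d * (d - 1) := by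
      calc 2 * (n * (n - 1)) = 4 * n.choose 2 := by rw [← two_mul_choose_two]; ring
        _ ≤ 4 * rho G v := by omega
        _ ≤ d * (d - 1) := hrho
    have hd1 : 1 ≤ d := by omega
    have hn1 : 1 ≤ n := by omega
    -- cast to integers
    have h2' : (2 : ℤ) * (n * (n - 1)) ≤ d * (d - 1) := by
      have := h2
      zify [hd1, hn1] at this
      exact this
    have hnZ : (d : ℤ) ≤ n + k := by exact_mod_cast le_trans hn (by omega)
    have hdZ : 7 * (k : ℤ) < d := by exact_mod_cast hd
    have hkZ : (1 : ℤ) ≤ k := by exact_mod_cast hk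
    nlinarith [sq_nonneg ((n : ℤ) - d + k), sq_nonneg ((d : ℤ) - 7 * k)]
  · -- tree case: the lifted cycle contradicts acyclicity
    have hsupp : ∀ x ∈ q.support, x ∈ comp.supp := by
      intro x hx
      rw [SimpleGraph.ConnectedComponent.mem_supp_iff]
      exact SimpleGraph.ConnectedComponent.sound ⟨(q.takeUntil x hx).reverse⟩
    have hvc : (⟨v, hvS⟩ : S) ∈ comp.supp := hsupp _ q.start_mem_support
    obtain ⟨q', hq'⟩ := exists_walk_induce (S := comp.supp) q hsupp hvc hvc
    have hq'c : q'.IsCycle := by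
      rw [← SimpleGraph.Walk.map_isCycle_iff_of_injective
        (f := (SimpleGraph.Embedding.induce (G := H) comp.supp).toHom) Subtype.val_injective, hq']
      exact hqc
    exact ht.2 q' hq'c
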